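/- Let δ ≥ 0 and suppose the frozen set F ⊆ {0,…,N−1} is such that for every i ∈ F, Σ_{ȳ} 2^{−N} Σ_{u₀^{i−1}} (∏_{j=0}^{i−1} P(u_j | u₀^{j−1}, ȳ)) · |1/2 − P(0 | u₀^{i−1}, ȳ)| ≤ δ. Then (1/N) Σ_{ū,ȳ} Q(ū,ȳ) d_H(ȳ, ūH_n) ≤ (1/N) Σ_{ū,ȳ} P(ū,ȳ) d_H(ȳ, ūH_n) + 2|F|δ, where P(ū,ȳ) = 2^{−N} ∏_{i=0}^{N−1} P(u_i | u₀^{i−1}, ȳ), Q(ū,ȳ) = 2^{−N} ∏_{i=0}^{N−1} Q(u_i | u₀^{i−1}, ȳ), Q(u_i|u₀^{i−1},ȳ) = 1/2 for i ∈ F and Q(u_i|u₀^{i−1},ȳ) = P(u_i|u₀^{i−1},ȳ) for i ∉ F, and d_H denotes Hamming distance. -/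

import Mathlib

open Finset

noncomputable section

/-- The polarization kernel `G₂ = [[1,0],[1,1]]` over GF(2). -/
def G2 : Matrix (Fin 2) (Fin 2) (ZMod 2) := !![1, 0; 1, 1]

/-- Index identification `Fin 2 × Fin (2^n) ≃ Fin (2^(n+1))`. -/
def finPowEquiv (n : ℕ) : Fin 2 × Fin (2 ^ n) ≃ Fin (2 ^ (n + 1)) :=
  finProdFinEquiv.trans (finCongr (by rw [pow_succ]; ring))

/-- The `n`-fold Kronecker power `G₂^{⊗n}` over GF(2). -/
def kronPow : (n : ℕ) → Matrix (Fin (2 ^ n)) (Fin (2 ^ n)) (ZMod 2)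
  | 0 => 1
  | n + 1 => Matrix.reindex (finPowEquiv n) (finPowEquiv n)
      (Matrix.kroneckerMap (· * ·) G2 (kronPow n))

/-- Reversal of the `n`-bit binary expansion of `i`. -/
def bitRevNat (n i : ℕ) : ℕ :=
  ∑ k ∈ Finset.range n, if Nat.testBit i (n - 1 - k) then 2 ^ k else 0

lemma sum_range_two_pow_lt (n : ℕ) : ∑ k ∈ Finset.range n, 2 ^ k < 2 ^ n := by
  induction n with
  | zero => simp
  | succ m ih => rw [Finset.sum_range_succ, pow_succ]; omega

lemma bitRevNat_lt (n i : ℕ) : bitRevNat n i < 2 ^ n := by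
  have h1 : bitRevNat n i ≤ ∑ k ∈ Finset.range n, 2 ^ k :=
    Finset.sum_le_sum (fun k _ => by split <;> simp)
  have h2 := sum_range_two_pow_lt n
  omega

/-- The bit-reversal permutation matrix `Aₙ`. -/
def bitRevMatrix (n : ℕ) : Matrix (Fin (2 ^ n)) (Fin (2 ^ n)) (ZMod 2) :=
  fun i j => if (j : ℕ) = bitRevNat n (i : ℕ) then 1 else 0

/-- The polar transform matrix `Hₙ = Aₙ G₂^{⊗n}`. -/
def polarH (n : ℕ) : Matrix (Fin (2 ^ n)) (Fin (2 ^ n)) (ZMod 2) :=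
  bitRevMatrix n * kronPow n

/-- BSC(D) transition probability `W(y∣x)`. -/
def bsc (D : ℝ) (y x : ZMod 2) : ℝ := if y = x then 1 - D else D

/-- The polar transform `x̄ = ū Hₙ` of a word `ū`. -/
def polarEnc (n : ℕ) (u : Fin (2 ^ n) → ZMod 2) : Fin (2 ^ n) → ZMod 2 :=
  Matrix.vecMul u (polarH n)

/-- `W^{(i)}(ȳ, u₀^{i−1} ∣ u_i)`; it depends on `u` only through coordinates `≤ i`,
the coordinates `> i` being summed out. -/
def Wi (D : ℝ) (n : ℕ) (y : Fin (2 ^ n) → ZMod 2) (i : Fin (2 ^ n))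
    (u : Fin (2 ^ n) → ZMod 2) : ℝ :=
  ((2 : ℝ) ^ (2 ^ n - 1))⁻¹ *
    ∑ v ∈ Finset.univ.filter (fun v : Fin (2 ^ n) → ZMod 2 => ∀ j, j ≤ i → v j = u j),
      ∏ j, bsc D (y j) (polarEnc n v j)

/-- The posterior `P(u_i ∣ u₀^{i−1}, ȳ)`. -/
def post (D : ℝ) (n : ℕ) (y : Fin (2 ^ n) → ZMod 2) (i : Fin (2 ^ n))
    (u : Fin (2 ^ n) → ZMod 2) : ℝ :=
  Wi D n y i u /
    (Wi D n y i (Function.update u i 0) + Wi D n y i (Function.update u i 1))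

/-- The joint distribution `P(ū, ȳ) = 2^{−N} ∏_i P(u_i ∣ u₀^{i−1}, ȳ)`. -/
def Pfull (D : ℝ) (n : ℕ) (u y : Fin (2 ^ n) → ZMod 2) : ℝ :=
  ((2 : ℝ) ^ (2 ^ n))⁻¹ * ∏ i, post D n y i u

/-- The joint distribution `Q(ū, ȳ)` in which the frozen coordinates `i ∈ F` are replaced
by fair coin flips. -/
def Qfull (D : ℝ) (n : ℕ) (F : Finset (Fin (2 ^ n))) (u y : Fin (2 ^ n) → ZMod 2) : ℝ :=
  ((2 : ℝ) ^ (2 ^ n))⁻¹ * ∏ i, (if i ∈ F then (1 / 2 : ℝ) else post D n y i u)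

/-- `E_P[ |1/2 − P(0 ∣ U₀^{i−1}, Ȳ)| ]`, pasts being represented by words vanishing from
coordinate `i` onwards. -/
def frozenBias (D : ℝ) (n : ℕ) (i : Fin (2 ^ n)) : ℝ :=
  ∑ y : Fin (2 ^ n) → ZMod 2, ((2 : ℝ) ^ (2 ^ n))⁻¹ *
    ∑ u ∈ Finset.univ.filter (fun u : Fin (2 ^ n) → ZMod 2 => ∀ j, i ≤ j → u j = 0),
      (∏ j ∈ Finset.univ.filter (fun j => j < i), post D n y j u) *
        |1 / 2 - post D n y i u|

section Aux
variable {n : ℕ}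

lemma zmod2_sum (g : ZMod 2 → ℝ) : ∑ a : ZMod 2, g a = g 0 + g 1 := by
  rw [show (Finset.univ : Finset (ZMod 2)) = {0, 1} from by decide]
  rw [Finset.sum_pair (by decide)]

lemma zmod2_cases (a : ZMod 2) : a = 0 ∨ a = 1 := by revert a; decide

lemma update_piSplitAt (t : Fin (2^n)) (p : ZMod 2 × ({j : Fin (2^n) // j ≠ t} → ZMod 2))
    (a : ZMod 2) :
    Function.update ((Equiv.piSplitAt t (fun _ => ZMod 2)).symm p) t a
      = (Equiv.piSplitAt t (fun _ => ZMod 2)).symm (a, p.2) := by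
  funext j
  by_cases hj : j = t
  · subst hj; simp [Equiv.piSplitAt]
  · simp [Equiv.piSplitAt, hj, Function.update_of_ne hj]

lemma sum_update_pair (f : (Fin (2^n) → ZMod 2) → ℝ) (t : Fin (2^n)) :
    ∑ u : Fin (2^n) → ZMod 2, (f (Function.update u t 0) + f (Function.update u t 1))
      = 2 * ∑ u : Fin (2^n) → ZMod 2, f u := by
  classical
  have h1 : ∀ g : (Fin (2^n) → ZMod 2) → ℝ,
      ∑ u, g u = ∑ p, g ((Equiv.piSplitAt t (fun _ : Fin (2^n) => ZMod 2)).symm p) :=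
    fun g => (Equiv.sum_comp (Equiv.piSplitAt t (fun _ : Fin (2^n) => ZMod 2)).symm g).symm
  rw [h1 (fun u => f (Function.update u t 0) + f (Function.update u t 1)), h1 f]
  rw [Fintype.sum_prod_type, Fintype.sum_prod_type]
  simp only [update_piSplitAt]
  rw [zmod2_sum (fun a => ∑ w, (f ((Equiv.piSplitAt t (fun _ : Fin (2^n) => ZMod 2)).symm (0, w))
    + f ((Equiv.piSplitAt t (fun _ : Fin (2^n) => ZMod 2)).symm (1, w))))]
  rw [zmod2_sum (fun a => ∑ w, f ((Equiv.piSplitAt t (fun _ : Fin (2^n) => ZMod 2)).symm (a, w)))]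
  rw [Finset.sum_add_distrib]
  ring

end Aux
section Aux2
variable {D : ℝ} {n : ℕ}

lemma Wi_congr (y : Fin (2^n) → ZMod 2) (i : Fin (2^n)) {u u' : Fin (2^n) → ZMod 2}
    (h : ∀ j, j ≤ i → u j = u' j) : Wi D n y i u = Wi D n y i u' := by
  unfold Wi
  congr 1
  apply Finset.sum_congr _ (fun _ _ => rfl)
  apply Finset.filter_congr
  intro v _
  constructor
  · intro hv j hj; rw [hv j hj, h j hj]
  · intro hv j hj; rw [hv j hj, h j hj]

lemma Wi_pos (hD0 : 0 < D) (hD1 : D < 1) (y : Fin (2^n) → ZMod 2) (i : Fin (2^n))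
    (u : Fin (2^n) → ZMod 2) : 0 < Wi D n y i u := by
  unfold Wi
  apply mul_pos (by positivity)
  apply Finset.sum_pos
  · intro v _
    apply Finset.prod_pos
    intro j _
    unfold bsc
    split
    · linarith
    · exact hD0
  · exact ⟨u, by simp⟩

lemma post_nonneg (hD0 : 0 < D) (hD1 : D < 1) (y : Fin (2^n) → ZMod 2) (i : Fin (2^n))
    (u : Fin (2^n) → ZMod 2) : 0 ≤ post D n y i u := by
  unfold post
  apply div_nonneg (Wi_pos hD0 hD1 y i u).le
  have h0 := Wi_pos hD0 hD1 y i (Function.update u i 0)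
  have h1 := Wi_pos hD0 hD1 y i (Function.update u i 1)
  linarith

lemma post_update_sum (hD0 : 0 < D) (hD1 : D < 1) (y : Fin (2^n) → ZMod 2) (i : Fin (2^n))
    (u : Fin (2^n) → ZMod 2) :
    post D n y i (Function.update u i 0) + post D n y i (Function.update u i 1) = 1 := by
  unfold post
  rw [Function.update_idem, Function.update_idem, Function.update_idem, Function.update_idem]
  have h0 := Wi_pos hD0 hD1 y i (Function.update u i 0)
  have h1 := Wi_pos hD0 hD1 y i (Function.update u i 1)
  rw [← add_div, div_self (by linarith)]

lemma post_update_high (y : Fin (2^n) → ZMod 2) {i j : Fin (2^n)} (hij : i < j)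
    (u : Fin (2^n) → ZMod 2) (a : ZMod 2) :
    post D n y i (Function.update u j a) = post D n y i u := by
  have hne : i ≠ j := ne_of_lt hij
  have key : ∀ w : Fin (2^n) → ZMod 2, Wi D n y i (Function.update w j a) = Wi D n y i w := by
    intro w
    apply Wi_congr
    intro k hk
    have : k ≠ j := fun h => absurd (h ▸ hk) (not_le.mpr hij)
    exact Function.update_of_ne this a w
  unfold post
  rw [Function.update_comm hne.symm a (0:ZMod 2) u, Function.update_comm hne.symm a (1:ZMod 2) u, key, key, key]

lemma post_abs_update (hD0 : 0 < D) (hD1 : D < 1) (y : Fin (2^n) → ZMod 2) (i : Fin (2^n))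
    (u : Fin (2^n) → ZMod 2) (a : ZMod 2) :
    |1 / 2 - post D n y i (Function.update u i a)| = |1 / 2 - post D n y i u| := by
  have hsum := post_update_sum hD0 hD1 y i u
  have key : ∀ b : ZMod 2, |1 / 2 - post D n y i (Function.update u i b)|
      = |1 / 2 - post D n y i (Function.update u i 0)| := by
    intro b
    rcases zmod2_cases b with rfl | rfl
    · rfl
    · have : post D n y i (Function.update u i 1) = 1 - post D n y i (Function.update u i 0) := by
        linarith
      rw [this, show (1:ℝ)/2 - (1 - post D n y i (Function.update u i 0))
        = -(1/2 - post D n y i (Function.update u i 0)) by ring, abs_neg]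
  rw [key a]
  conv_rhs => rw [← Function.update_eq_self i u]
  rw [key (u i)]

end Aux2
section Aux3
variable {n : ℕ}

lemma marg_out (c : Fin (2^n) → (Fin (2^n) → ZMod 2) → ℝ)
    (hc1 : ∀ i (u : Fin (2^n) → ZMod 2) j a, i < j → c i (Function.update u j a) = c i u)
    (hc2 : ∀ i (u : Fin (2^n) → ZMod 2),
      c i (Function.update u i 0) + c i (Function.update u i 1) = 1)
    (S : Finset (Fin (2^n))) (h : (Fin (2^n) → ZMod 2) → ℝ)
    (hh : ∀ j ∈ S, ∀ (u : Fin (2^n) → ZMod 2) a, h (Function.update u j a) = h u) :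
    ∑ u : Fin (2^n) → ZMod 2, h u * ∏ i ∈ S, c i u
      = (1/2 : ℝ)^(S.card) * ∑ u : Fin (2^n) → ZMod 2, h u := by
  classical
  induction S using Finset.strongInduction with
  | _ S ih =>
    rcases S.eq_empty_or_nonempty with rfl | hne
    · simp
    · have htS : S.max' hne ∈ S := S.max'_mem hne
      set t := S.max' hne with ht
      set g : (Fin (2^n) → ZMod 2) → ℝ := fun u => h u * ∏ i ∈ S.erase t, c i u with hg
      have hgt : ∀ (u : Fin (2^n) → ZMod 2) a, g (Function.update u t a) = g u := by
        intro u a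
        simp only [hg]
        rw [hh t htS]
        congr 1
        apply Finset.prod_congr rfl
        intro i hi
        exact hc1 i u t a (lt_of_le_of_ne (S.le_max' i (Finset.mem_of_mem_erase hi))
          (Finset.ne_of_mem_erase hi))
      have step1 : ∑ u : Fin (2^n) → ZMod 2, h u * ∏ i ∈ S, c i u
          = (1/2 : ℝ) * ∑ u : Fin (2^n) → ZMod 2, g u := by
        have e1 : ∀ u : Fin (2^n) → ZMod 2, h u * ∏ i ∈ S, c i u = g u * c t u := by
          intro u
          rw [hg]
          simp only
          rw [← Finset.mul_prod_erase S _ htS]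
          ring
        simp only [e1]
        have e2 := sum_update_pair (fun u => g u * c t u) t
        have e3 : ∀ u : Fin (2^n) → ZMod 2,
            g (Function.update u t 0) * c t (Function.update u t 0)
            + g (Function.update u t 1) * c t (Function.update u t 1) = g u := by
          intro u
          rw [hgt u 0, hgt u 1, ← mul_add, hc2 t u, mul_one]
        simp only [e3] at e2
        linarith
      have step2 : ∑ u : Fin (2^n) → ZMod 2, g u
          = (1/2 : ℝ)^((S.erase t).card) * ∑ u : Fin (2^n) → ZMod 2, h u := by
        apply ih (S.erase t) (Finset.erase_ssubset htS)
        intro j hj u a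
        exact hh j (Finset.mem_of_mem_erase hj) u a
      rw [step1, step2, Finset.card_erase_of_mem htS]
      have hcard : 1 ≤ S.card := Finset.card_pos.mpr hne
      have hp : (1/2:ℝ)^(S.card) = (1/2)^(S.card - 1) * (1/2) := by
        rw [← pow_succ]
        congr 1
        omega
      rw [hp]
      ring

lemma sum_zero_coords (T : Finset (Fin (2^n))) (h : (Fin (2^n) → ZMod 2) → ℝ)
    (hh : ∀ j ∈ T, ∀ (u : Fin (2^n) → ZMod 2) a, h (Function.update u j a) = h u) :
    ∑ u : Fin (2^n) → ZMod 2, h u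
      = (2:ℝ)^(T.card) * ∑ u ∈ Finset.univ.filter
          (fun u : Fin (2^n) → ZMod 2 => ∀ j ∈ T, u j = 0), h u := by
  classical
  induction T using Finset.induction with
  | empty => simp
  | @insert t T htT ih =>
    have ihh : ∀ j ∈ T, ∀ (u : Fin (2^n) → ZMod 2) a, h (Function.update u j a) = h u :=
      fun j hj => hh j (Finset.mem_insert_of_mem hj)
    have hht : ∀ (u : Fin (2^n) → ZMod 2) a, h (Function.update u t a) = h u :=
      hh t (Finset.mem_insert_self t T)
    rw [ih ihh]
    rw [Finset.card_insert_of_notMem htT]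
    set P : (Fin (2^n) → ZMod 2) → Prop := fun u => ∀ j ∈ T, u j = 0 with hP
    have split := Finset.sum_filter_add_sum_filter_not
      (Finset.univ.filter (fun u : Fin (2^n) → ZMod 2 => P u))
      (fun u : Fin (2^n) → ZMod 2 => u t = 0) h
    have hA0 : (Finset.univ.filter (fun u : Fin (2^n) → ZMod 2 => P u)).filter
        (fun u => u t = 0)
        = Finset.univ.filter (fun u : Fin (2^n) → ZMod 2 => ∀ j ∈ insert t T, u j = 0) := by
      ext u
      simp only [Finset.mem_filter, Finset.mem_univ, true_and, Finset.mem_insert, hP]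
      constructor
      · rintro ⟨h1, h2⟩ j (rfl | hj)
        · exact h2
        · exact h1 j hj
      · intro hu
        exact ⟨fun j hj => hu j (Or.inr hj), hu t (Or.inl rfl)⟩
    have hbij : ∑ u ∈ (Finset.univ.filter (fun u : Fin (2^n) → ZMod 2 => P u)).filter
          (fun u => ¬ u t = 0), h u
        = ∑ u ∈ (Finset.univ.filter (fun u : Fin (2^n) → ZMod 2 => P u)).filter
          (fun u => u t = 0), h u := by
      apply Finset.sum_nbij' (fun u => Function.update u t 0) (fun u => Function.update u t 1)
      · intro u hu
        simp only [Finset.mem_filter, Finset.mem_univ, true_and, hP] at hu ⊢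
        refine ⟨fun j hj => ?_, ?_⟩
        · rw [Function.update_of_ne (fun hjt => htT (by rwa [hjt] at hj)) 0 u]
          exact hu.1 j hj
        · simp
      · intro u hu
        simp only [Finset.mem_filter, Finset.mem_univ, true_and, hP] at hu ⊢
        refine ⟨fun j hj => ?_, ?_⟩
        · rw [Function.update_of_ne (fun hjt => htT (by rwa [hjt] at hj)) 1 u]
          exact hu.1 j hj
        · simp
      · intro u hu
        simp only [Finset.mem_filter, Finset.mem_univ, true_and, hP] at hu
        rw [Function.update_idem]
        rcases zmod2_cases (u t) with h0 | h1
        · exact absurd h0 hu.2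
        · rw [← h1, Function.update_eq_self]
      · intro u hu
        simp only [Finset.mem_filter, Finset.mem_univ, true_and, hP] at hu
        rw [Function.update_idem, ← hu.2, Function.update_eq_self]
      · intro u _
        exact (hht u 0).symm
    rw [hA0] at split hbij
    rw [← split, hbij]
    rw [pow_succ]
    ring

end Aux3
section Aux4

def mixP (D : ℝ) (n : ℕ) (F : Finset (Fin (2^n))) (m : ℕ) (u y : Fin (2^n) → ZMod 2) : ℝ :=
  ((2:ℝ)^(2^n))⁻¹ * ∏ i, (if i ∈ F ∧ m ≤ (i:ℕ) then (1/2:ℝ) else post D n y i u)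

variable {D : ℝ} {n : ℕ}

lemma mixP_zero (F : Finset (Fin (2^n))) (u y : Fin (2^n) → ZMod 2) :
    mixP D n F 0 u y = Qfull D n F u y := by
  unfold mixP Qfull
  congr 1
  apply Finset.prod_congr rfl
  intro i _
  simp [Nat.zero_le]

lemma mixP_top (F : Finset (Fin (2^n))) (u y : Fin (2^n) → ZMod 2) :
    mixP D n F (2^n) u y = Pfull D n u y := by
  unfold mixP Pfull
  congr 1
  apply Finset.prod_congr rfl
  intro i _
  have h : ¬ ((2:ℕ)^n ≤ (i:ℕ)) := not_le.mpr i.isLt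
  simp [h]

lemma mixP_step_notin (F : Finset (Fin (2^n))) (m : ℕ) (hm : m < 2^n)
    (hk : (⟨m, hm⟩ : Fin (2^n)) ∉ F) (u y : Fin (2^n) → ZMod 2) :
    mixP D n F (m+1) u y = mixP D n F m u y := by
  unfold mixP
  congr 1
  apply Finset.prod_congr rfl
  intro i _
  by_cases hi : (i:ℕ) = m
  · have hik : i = (⟨m, hm⟩ : Fin (2^n)) := Fin.ext hi
    subst hik
    simp [hk]
  · have h : (m + 1 ≤ (i:ℕ)) ↔ (m ≤ (i:ℕ)) := by omega
    exact if_congr (and_congr_right fun _ => h) rfl rfl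

lemma mixP_step_in (hD0 : 0 < D) (hD1 : D < 1) (F : Finset (Fin (2^n))) (m : ℕ)
    (hm : m < 2^n) (hk : (⟨m, hm⟩ : Fin (2^n)) ∈ F) :
    ∑ y : Fin (2^n) → ZMod 2, ∑ u : Fin (2^n) → ZMod 2,
        |mixP D n F (m+1) u y - mixP D n F m u y|
      = 2 * frozenBias D n ⟨m, hm⟩ := by
  classical
  set k : Fin (2^n) := ⟨m, hm⟩ with hkdef
  have main : ∀ y : Fin (2^n) → ZMod 2,
      ∑ u : Fin (2^n) → ZMod 2, |mixP D n F (m+1) u y - mixP D n F m u y|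
      = 2 * (((2:ℝ)^(2^n))⁻¹ * ∑ u ∈ Finset.univ.filter
          (fun u : Fin (2^n) → ZMod 2 => ∀ j, k ≤ j → u j = 0),
          (∏ j ∈ Finset.univ.filter (fun j => j < k), post D n y j u)
            * |1 / 2 - post D n y k u|) := by
    intro y
    set c : Fin (2^n) → (Fin (2^n) → ZMod 2) → ℝ :=
      fun i u => if i ∈ F ∧ m + 1 ≤ (i:ℕ) then (1/2:ℝ) else post D n y i u with hc
    set h : (Fin (2^n) → ZMod 2) → ℝ :=
      fun u => (∏ j ∈ Finset.univ.filter (fun j => j < k), post D n y j u)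
        * |1 / 2 - post D n y k u| with hhdef
    -- Step A: difference formula
    have stepA : ∀ u : Fin (2^n) → ZMod 2, mixP D n F (m+1) u y - mixP D n F m u y
        = ((2:ℝ)^(2^n))⁻¹ * ((post D n y k u - 1/2) * ∏ i ∈ Finset.univ.erase k, c i u) := by
      intro u
      have hprod1 : ∏ i, (if i ∈ F ∧ m + 1 ≤ (i:ℕ) then (1/2:ℝ) else post D n y i u)
          = post D n y k u * ∏ i ∈ Finset.univ.erase k, c i u := by
        rw [← Finset.mul_prod_erase Finset.univ _ (Finset.mem_univ k)]
        congr 1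
        have hle : ¬ (m + 1 ≤ (k:ℕ)) := by simp [hkdef]
        simp [hle]
      have hprod2 : ∏ i, (if i ∈ F ∧ m ≤ (i:ℕ) then (1/2:ℝ) else post D n y i u)
          = (1/2:ℝ) * ∏ i ∈ Finset.univ.erase k, c i u := by
        rw [← Finset.mul_prod_erase Finset.univ _ (Finset.mem_univ k)]
        congr 1
        · have hle : m ≤ (k:ℕ) := by simp [hkdef]
          simp [hk, hle]
        · apply Finset.prod_congr rfl
          intro i hi
          have hne : (i:ℕ) ≠ m := fun hh => (Finset.ne_of_mem_erase hi) (Fin.ext hh)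
          have heq : (m ≤ (i:ℕ)) ↔ (m + 1 ≤ (i:ℕ)) := by omega
          rw [hc]
          simp only [heq]
      unfold mixP
      rw [hprod1, hprod2]
      ring
    -- Step B: absolute value
    have hcnn : ∀ i (u : Fin (2^n) → ZMod 2), 0 ≤ c i u := by
      intro i u
      simp only [hc]
      split
      · norm_num
      · exact post_nonneg hD0 hD1 y i u
    have stepB : ∀ u : Fin (2^n) → ZMod 2, |mixP D n F (m+1) u y - mixP D n F m u y|
        = ((2:ℝ)^(2^n))⁻¹ * (|1 / 2 - post D n y k u| * ∏ i ∈ Finset.univ.erase k, c i u) := by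
      intro u
      rw [stepA u, abs_mul, abs_mul, abs_of_nonneg (by positivity : (0:ℝ) ≤ ((2:ℝ)^(2^n))⁻¹),
        abs_of_nonneg (Finset.prod_nonneg fun i _ => hcnn i u), abs_sub_comm]
    -- Step C: split the product
    have hsplit : Finset.univ.erase k
        = Finset.univ.filter (fun j => j < k) ∪ Finset.univ.filter (fun j => k < j) := by
      ext i
      simp only [Finset.mem_erase, Finset.mem_union, Finset.mem_filter, Finset.mem_univ,
        true_and, and_true]
      exact ne_iff_lt_or_gt
    have hdisj : Disjoint (Finset.univ.filter (fun j => j < k))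
        (Finset.univ.filter (fun j : Fin (2^n) => k < j)) := by
      rw [Finset.disjoint_left]
      intro i hi1 hi2
      simp only [Finset.mem_filter] at hi1 hi2
      exact absurd hi2.2 (not_lt.mpr hi1.2.le)
    have hlowc : ∀ u : Fin (2^n) → ZMod 2,
        ∏ i ∈ Finset.univ.filter (fun j => j < k), c i u
        = ∏ i ∈ Finset.univ.filter (fun j => j < k), post D n y i u := by
      intro u
      apply Finset.prod_congr rfl
      intro i hi
      simp only [Finset.mem_filter] at hi
      have : ¬ (m + 1 ≤ (i:ℕ)) := by
        have := hi.2
        rw [Fin.lt_def] at this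
        simp only [hkdef] at this
        omega
      simp only [hc]
      simp [this]
    have stepC : ∀ u : Fin (2^n) → ZMod 2,
        |1 / 2 - post D n y k u| * ∏ i ∈ Finset.univ.erase k, c i u
        = h u * ∏ i ∈ Finset.univ.filter (fun j => k < j), c i u := by
      intro u
      rw [hsplit, Finset.prod_union hdisj, hlowc u, hhdef]
      ring
    -- Step D: marginalize the coordinates above k
    have hc1 : ∀ i (u : Fin (2^n) → ZMod 2) j a, i < j → c i (Function.update u j a) = c i u := by
      intro i u j a hij
      simp only [hc]
      split
      · rfl
      · exact post_update_high y hij u a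
    have hc2 : ∀ i (u : Fin (2^n) → ZMod 2),
        c i (Function.update u i 0) + c i (Function.update u i 1) = 1 := by
      intro i u
      simp only [hc]
      split
      · norm_num
      · exact post_update_sum hD0 hD1 y i u
    have hhS : ∀ j ∈ Finset.univ.filter (fun j : Fin (2^n) => k < j),
        ∀ (u : Fin (2^n) → ZMod 2) a, h (Function.update u j a) = h u := by
      intro j hj u a
      simp only [Finset.mem_filter] at hj
      simp only [hhdef]
      rw [post_update_high y hj.2 u a]
      congr 1
      apply Finset.prod_congr rfl
      intro j' hj'
      simp only [Finset.mem_filter] at hj'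
      exact post_update_high y (lt_trans hj'.2 hj.2) u a
    have stepD := marg_out c hc1 hc2 (Finset.univ.filter (fun j : Fin (2^n) => k < j)) h hhS
    -- Step E: zero out coordinates ≥ k
    set T : Finset (Fin (2^n)) := insert k (Finset.univ.filter (fun j : Fin (2^n) => k < j))
      with hT
    have hkT : k ∉ Finset.univ.filter (fun j : Fin (2^n) => k < j) := by simp
    have hhT : ∀ j ∈ T, ∀ (u : Fin (2^n) → ZMod 2) a, h (Function.update u j a) = h u := by
      intro j hj u a
      rw [hT, Finset.mem_insert] at hj
      rcases hj with rfl | hj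
      · simp only [hhdef]
        rw [post_abs_update hD0 hD1 y k u a]
        congr 1
        apply Finset.prod_congr rfl
        intro j' hj'
        simp only [Finset.mem_filter] at hj'
        exact post_update_high y hj'.2 u a
      · exact hhS j hj u a
    have stepE := sum_zero_coords T h hhT
    have hTfilter : Finset.univ.filter (fun u : Fin (2^n) → ZMod 2 => ∀ j ∈ T, u j = 0)
        = Finset.univ.filter (fun u : Fin (2^n) → ZMod 2 => ∀ j, k ≤ j → u j = 0) := by
      apply Finset.filter_congr
      intro u _
      constructor
      · intro hu j hkj
        rcases eq_or_lt_of_le hkj with heq | hlt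
        · exact heq ▸ hu k (Finset.mem_insert_self _ _)
        · exact hu j (by simp [hT, hlt])
      · intro hu j hj
        rw [hT, Finset.mem_insert] at hj
        rcases hj with heq | hj
        · exact hu j (le_of_eq heq.symm)
        · simp only [Finset.mem_filter] at hj
          exact hu j hj.2.le
    rw [hTfilter] at stepE
    have hTcard : T.card = (Finset.univ.filter (fun j : Fin (2^n) => k < j)).card + 1 := by
      rw [hT, Finset.card_insert_of_notMem hkT]
    -- Put everything together
    calc ∑ u : Fin (2^n) → ZMod 2, |mixP D n F (m+1) u y - mixP D n F m u y|
        = ∑ u : Fin (2^n) → ZMod 2, ((2:ℝ)^(2^n))⁻¹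
            * (h u * ∏ i ∈ Finset.univ.filter (fun j : Fin (2^n) => k < j), c i u) := by
          apply Finset.sum_congr rfl
          intro u _
          rw [stepB u, stepC u]
      _ = ((2:ℝ)^(2^n))⁻¹ * ∑ u : Fin (2^n) → ZMod 2,
            h u * ∏ i ∈ Finset.univ.filter (fun j : Fin (2^n) => k < j), c i u := by
          rw [Finset.mul_sum]
      _ = ((2:ℝ)^(2^n))⁻¹
          * ((1/2 : ℝ)^((Finset.univ.filter (fun j : Fin (2^n) => k < j)).card)
            * ∑ u : Fin (2^n) → ZMod 2, h u) := by rw [stepD]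
      _ = ((2:ℝ)^(2^n))⁻¹
          * ((1/2 : ℝ)^((Finset.univ.filter (fun j : Fin (2^n) => k < j)).card)
            * ((2:ℝ)^(T.card) * ∑ u ∈ Finset.univ.filter
                (fun u : Fin (2^n) → ZMod 2 => ∀ j, k ≤ j → u j = 0), h u)) := by rw [stepE]
      _ = 2 * (((2:ℝ)^(2^n))⁻¹ * ∑ u ∈ Finset.univ.filter
            (fun u : Fin (2^n) → ZMod 2 => ∀ j, k ≤ j → u j = 0),
            (∏ j ∈ Finset.univ.filter (fun j => j < k), post D n y j u)
              * |1 / 2 - post D n y k u|) := by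
          rw [hTcard]
          simp only [hhdef]
          set s := (Finset.univ.filter (fun j : Fin (2^n) => k < j)).card with hs
          set X := ∑ u ∈ Finset.univ.filter
              (fun u : Fin (2^n) → ZMod 2 => ∀ j, k ≤ j → u j = 0),
              (∏ j ∈ Finset.univ.filter (fun j => j < k), post D n y j u)
                * |1 / 2 - post D n y k u| with hX
          have harith : (1/2 : ℝ)^s * (2:ℝ)^(s+1) = 2 := by
            rw [one_div, inv_pow, pow_succ]
            field_simp
          linear_combination (((2:ℝ)^(2^n))⁻¹ * X) * harith
    -- end calc
  unfold frozenBias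
  rw [Finset.mul_sum]
  apply Finset.sum_congr rfl
  intro y _
  exact main y

end Aux4
/-- **Distortion under `Q` versus distortion under `P`**: if every frozen index has bias at
most `δ`, the normalized expected Hamming distortion under `Q` exceeds the one under `P`
by at most `2|F|δ`. -/
theorem distortion_Q_versus_P (D : ℝ) (hD0 : 0 < D) (hD1 : D < 1)
    (n : ℕ) (F : Finset (Fin (2 ^ n))) (δ : ℝ) (hδ : 0 ≤ δ)
    (hF : ∀ i ∈ F, frozenBias D n i ≤ δ) :
    (((2 ^ n : ℕ) : ℝ))⁻¹ *
        ∑ u : Fin (2 ^ n) → ZMod 2, ∑ y : Fin (2 ^ n) → ZMod 2,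
          Qfull D n F u y * (hammingDist y (polarEnc n u) : ℝ)
      ≤ (((2 ^ n : ℕ) : ℝ))⁻¹ *
          ∑ u : Fin (2 ^ n) → ZMod 2, ∑ y : Fin (2 ^ n) → ZMod 2,
            Pfull D n u y * (hammingDist y (polarEnc n u) : ℝ)
        + 2 * F.card * δ := by
  classical
  set cN : ℝ := ((2 ^ n : ℕ) : ℝ) with hcN
  have hcNpos : 0 < cN := by
    rw [hcN]
    positivity
  -- total variation bound
  set B : ℝ := ∑ u : Fin (2 ^ n) → ZMod 2, ∑ y : Fin (2 ^ n) → ZMod 2,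
      |Qfull D n F u y - Pfull D n u y| with hB
  have hBbound : B ≤ 2 * F.card * δ := by
    have tele : ∀ u y : Fin (2 ^ n) → ZMod 2,
        |Qfull D n F u y - Pfull D n u y|
        ≤ ∑ m ∈ Finset.range (2 ^ n), |mixP D n F (m + 1) u y - mixP D n F m u y| := by
      intro u y
      have h1 : Qfull D n F u y - Pfull D n u y
          = ∑ m ∈ Finset.range (2 ^ n), (mixP D n F m u y - mixP D n F (m + 1) u y) := by
        rw [Finset.sum_range_sub' (fun m => mixP D n F m u y) (2 ^ n), mixP_zero, mixP_top]
      rw [h1]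
      refine (Finset.abs_sum_le_sum_abs _ _).trans (le_of_eq ?_)
      exact Finset.sum_congr rfl fun m _ => abs_sub_comm _ _
    have hd1 : B ≤ ∑ m ∈ Finset.range (2 ^ n),
        ∑ y : Fin (2 ^ n) → ZMod 2, ∑ u : Fin (2 ^ n) → ZMod 2,
          |mixP D n F (m + 1) u y - mixP D n F m u y| := by
      rw [hB]
      calc ∑ u : Fin (2 ^ n) → ZMod 2, ∑ y : Fin (2 ^ n) → ZMod 2,
            |Qfull D n F u y - Pfull D n u y|
          ≤ ∑ u : Fin (2 ^ n) → ZMod 2, ∑ y : Fin (2 ^ n) → ZMod 2,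
            ∑ m ∈ Finset.range (2 ^ n), |mixP D n F (m + 1) u y - mixP D n F m u y| := by
            apply Finset.sum_le_sum
            intro u _
            apply Finset.sum_le_sum
            intro y _
            exact tele u y
        _ = ∑ u : Fin (2 ^ n) → ZMod 2, ∑ m ∈ Finset.range (2 ^ n),
            ∑ y : Fin (2 ^ n) → ZMod 2, |mixP D n F (m + 1) u y - mixP D n F m u y| :=
            Finset.sum_congr rfl fun u _ => Finset.sum_comm
        _ = ∑ m ∈ Finset.range (2 ^ n), ∑ u : Fin (2 ^ n) → ZMod 2,
            ∑ y : Fin (2 ^ n) → ZMod 2, |mixP D n F (m + 1) u y - mixP D n F m u y| :=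
            Finset.sum_comm
        _ = ∑ m ∈ Finset.range (2 ^ n), ∑ y : Fin (2 ^ n) → ZMod 2,
            ∑ u : Fin (2 ^ n) → ZMod 2, |mixP D n F (m + 1) u y - mixP D n F m u y| :=
            Finset.sum_congr rfl fun m _ => Finset.sum_comm
    have hd2 : ∑ m ∈ Finset.range (2 ^ n),
        ∑ y : Fin (2 ^ n) → ZMod 2, ∑ u : Fin (2 ^ n) → ZMod 2,
          |mixP D n F (m + 1) u y - mixP D n F m u y|
        = ∑ i : Fin (2 ^ n),
          ∑ y : Fin (2 ^ n) → ZMod 2, ∑ u : Fin (2 ^ n) → ZMod 2,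
            |mixP D n F ((i : ℕ) + 1) u y - mixP D n F (i : ℕ) u y| :=
      (Fin.sum_univ_eq_sum_range (fun m => ∑ y : Fin (2 ^ n) → ZMod 2,
        ∑ u : Fin (2 ^ n) → ZMod 2,
          |mixP D n F (m + 1) u y - mixP D n F m u y|) (2 ^ n)).symm
    have hd3 : ∑ i : Fin (2 ^ n),
        ∑ y : Fin (2 ^ n) → ZMod 2, ∑ u : Fin (2 ^ n) → ZMod 2,
          |mixP D n F ((i : ℕ) + 1) u y - mixP D n F (i : ℕ) u y|
        ≤ ∑ i : Fin (2 ^ n), (if i ∈ F then 2 * δ else 0) := by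
      apply Finset.sum_le_sum
      intro i _
      by_cases hiF : i ∈ F
      · have heta : (⟨(i : ℕ), i.isLt⟩ : Fin (2 ^ n)) = i := Fin.eta i i.isLt
        have := mixP_step_in hD0 hD1 F (i : ℕ) i.isLt (heta ▸ hiF)
        rw [heta] at this
        rw [this]
        simp only [hiF, if_true]
        have hfb := hF i hiF
        linarith
      · have heta : (⟨(i : ℕ), i.isLt⟩ : Fin (2 ^ n)) = i := Fin.eta i i.isLt
        have hz : ∀ (u y : Fin (2 ^ n) → ZMod 2),
            mixP D n F ((i : ℕ) + 1) u y = mixP D n F (i : ℕ) u y :=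
          fun u y => mixP_step_notin F (i : ℕ) i.isLt (heta ▸ hiF) u y
        simp only [hiF, if_false]
        apply le_of_eq
        apply Finset.sum_eq_zero
        intro y _
        apply Finset.sum_eq_zero
        intro u _
        rw [hz u y]
        simp
    have hd4 : ∑ i : Fin (2 ^ n), (if i ∈ F then 2 * δ else 0) = 2 * F.card * δ := by
      rw [Finset.sum_ite_mem, Finset.univ_inter, Finset.sum_const, nsmul_eq_mul]
      ring
    calc B ≤ _ := hd1
      _ = _ := hd2
      _ ≤ _ := hd3
      _ = 2 * F.card * δ := hd4
  -- distortion comparison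
  have hdist : ∀ u y : Fin (2 ^ n) → ZMod 2,
      Qfull D n F u y * (hammingDist y (polarEnc n u) : ℝ)
        - Pfull D n u y * (hammingDist y (polarEnc n u) : ℝ)
      ≤ |Qfull D n F u y - Pfull D n u y| * cN := by
    intro u y
    have h1 : (0 : ℝ) ≤ (hammingDist y (polarEnc n u) : ℝ) := Nat.cast_nonneg _
    have h2 : (hammingDist y (polarEnc n u) : ℝ) ≤ cN := by
      rw [hcN]
      have := @hammingDist_le_card_fintype (Fin (2 ^ n)) (fun _ => ZMod 2) _ _
        y (polarEnc n u)
      rw [Fintype.card_fin] at this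
      exact_mod_cast this
    calc Qfull D n F u y * (hammingDist y (polarEnc n u) : ℝ)
          - Pfull D n u y * (hammingDist y (polarEnc n u) : ℝ)
        = (Qfull D n F u y - Pfull D n u y) * (hammingDist y (polarEnc n u) : ℝ) := by ring
      _ ≤ |Qfull D n F u y - Pfull D n u y| * (hammingDist y (polarEnc n u) : ℝ) :=
          mul_le_mul_of_nonneg_right (le_abs_self _) h1
      _ ≤ |Qfull D n F u y - Pfull D n u y| * cN :=
          mul_le_mul_of_nonneg_left h2 (abs_nonneg _)
  have hmain : (∑ u : Fin (2 ^ n) → ZMod 2, ∑ y : Fin (2 ^ n) → ZMod 2,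
        Qfull D n F u y * (hammingDist y (polarEnc n u) : ℝ))
      - (∑ u : Fin (2 ^ n) → ZMod 2, ∑ y : Fin (2 ^ n) → ZMod 2,
        Pfull D n u y * (hammingDist y (polarEnc n u) : ℝ)) ≤ B * cN := by
    rw [← Finset.sum_sub_distrib]
    simp only [← Finset.sum_sub_distrib]
    rw [hB, Finset.sum_mul]
    apply Finset.sum_le_sum
    intro u _
    rw [Finset.sum_mul]
    apply Finset.sum_le_sum
    intro y _
    exact hdist u y
  have hfinal : cN⁻¹ * ((∑ u : Fin (2 ^ n) → ZMod 2, ∑ y : Fin (2 ^ n) → ZMod 2,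
        Qfull D n F u y * (hammingDist y (polarEnc n u) : ℝ))
      - (∑ u : Fin (2 ^ n) → ZMod 2, ∑ y : Fin (2 ^ n) → ZMod 2,
        Pfull D n u y * (hammingDist y (polarEnc n u) : ℝ))) ≤ 2 * F.card * δ := by
    calc cN⁻¹ * _ ≤ cN⁻¹ * (B * cN) := by
          apply mul_le_mul_of_nonneg_left hmain (inv_nonneg.mpr hcNpos.le)
      _ = B := by field_simp
      _ ≤ 2 * F.card * δ := hBbound
  rw [mul_sub] at hfinal
  linarith

end
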